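/- Let L = F_{2^l} with l odd, q = 2^k, gcd(k,l) = 1, and c, d ∈ L with Tr_{L/F_2}(c) = 1, d ≠ 0. If the map φ(x) = (x^{q+1} + d)/(x^q + x + c) is injective on L (note x^q + x + c never vanishes on L since Tr(c)=1), then c = 1 and d = 1. -/

import Mathlib

namespace FracRig

variable {L : Type} [Field L]

/-- truncated trace-type sum -/
def tr (n : ℕ) (x : L) : L := ∑ j ∈ Finset.range n, x ^ 2 ^ j

section basic
variable (h2 : (2 : L) = 0)
include h2

lemma addSelf (a : L) : a + a = 0 := by rw [← two_mul, h2, zero_mul]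

lemma eqOfAddZero {a b : L} (h : a + b = 0) : a = b := by
  have := addSelf h2 b; linear_combination h - this

lemma sqAdd (a b : L) : (a + b) ^ 2 = a ^ 2 + b ^ 2 := by
  linear_combination add_sq a b + (a*b) * h2

lemma pow2Add (n : ℕ) (a b : L) : (a + b) ^ 2 ^ n = a ^ 2 ^ n + b ^ 2 ^ n := by
  induction n with
  | zero => simp
  | succ n ih =>
      rw [pow_succ, pow_mul, pow_mul, pow_mul, ih, sqAdd h2]

lemma sumSq {ι : Type} (s : Finset ι) (f : ι → L) :
    (∑ i ∈ s, f i) ^ 2 = ∑ i ∈ s, f i ^ 2 := by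
  classical
  induction s using Finset.induction with
  | empty => simp
  | insert _ _ hx ih => rw [Finset.sum_insert hx, Finset.sum_insert hx, sqAdd h2, ih]

lemma trAdd (n : ℕ) (x y : L) : tr n (x + y) = tr n x + tr n y := by
  unfold tr
  rw [← Finset.sum_add_distrib]
  exact Finset.sum_congr rfl fun j _ => pow2Add h2 j x y

omit h2 in
lemma trZero (n : ℕ) : tr n (0 : L) = 0 := by
  unfold tr
  exact Finset.sum_eq_zero fun j _ => zero_pow (by positivity)

lemma trSqComm (n : ℕ) (x : L) : tr n (x ^ 2) = (tr n x) ^ 2 := by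
  unfold tr
  rw [sumSq h2]
  exact Finset.sum_congr rfl fun j _ => by rw [← pow_mul, ← pow_mul, mul_comm]

lemma trSum (n : ℕ) {ι : Type} (s : Finset ι) (f : ι → L) :
    tr n (∑ i ∈ s, f i) = ∑ i ∈ s, tr n (f i) := by
  classical
  induction s using Finset.induction with
  | empty => simpa using trZero (L := L) n
  | insert _ _ hx ih => rw [Finset.sum_insert hx, Finset.sum_insert hx, trAdd h2, ih]

lemma trOne (n : ℕ) (hodd : Odd n) : tr n (1 : L) = 1 := by
  unfold tr
  obtain ⟨m, hm⟩ := hodd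
  simp only [one_pow, Finset.sum_const, Finset.card_range, nsmul_eq_mul, mul_one]
  rw [hm]
  push_cast
  rw [h2]; ring

end basic

section withcard
variable {l : ℕ} (hpc : ∀ x : L, x ^ 2 ^ l = x)
include hpc

lemma trSq (x : L) : tr l (x ^ 2) = tr l x := by
  have key : (∑ j ∈ Finset.range l, x ^ 2 ^ (j+1)) + x ^ 2 ^ 0
      = tr l x + x ^ 2 ^ l := by
    rw [← Finset.sum_range_succ' (fun j => x ^ 2 ^ j) l, ]
    exact Finset.sum_range_succ (fun j => x ^ 2 ^ j) l
  have h0 : x ^ 2 ^ 0 = x := by norm_num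
  rw [h0, hpc x] at key
  have : tr l (x^2) = ∑ j ∈ Finset.range l, x ^ 2 ^ (j+1) := by
    unfold tr
    exact Finset.sum_congr rfl fun j _ => by
      rw [← pow_mul, ← pow_succ']
  rw [this]
  exact add_right_cancel key

lemma trPow2 (i : ℕ) (x : L) : tr l (x ^ 2 ^ i) = tr l x := by
  induction i with
  | zero => norm_num
  | succ i ih =>
      have : x ^ 2 ^ (i+1) = (x ^ 2 ^ i) ^ 2 := by rw [← pow_mul, pow_succ]
      rw [this, trSq hpc, ih]

lemma trIdem (h2 : (2:L) = 0) (x : L) : tr l x = 0 ∨ tr l x = 1 := by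
  have h := trSq hpc x
  rw [trSqComm h2 l x] at h
  have : tr l x * (tr l x - 1) = 0 := by ring_nf; linear_combination h
  rcases mul_eq_zero.mp this with h' | h'
  · exact Or.inl h'
  · exact Or.inr (by linear_combination h')

omit hpc in
lemma neZeroOfTrOne {v : L} (htv : tr l v = 1) : v ≠ 0 := by
  intro h
  rw [h, trZero (L := L)] at htv
  exact zero_ne_one htv

end withcard


section Tsec
variable (h2 : (2 : L) = 0)
include h2

/-- telescoping: x^(2^k) + x = T(x^2+x) -/
lemma Tspec (k : ℕ) (x : L) : x ^ 2 ^ k + x = tr k (x ^ 2 + x) := by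
  induction k with
  | zero => simp [tr, addSelf h2]
  | succ k ih =>
      have e1 : (x^2+x) ^ 2 ^ k = x ^ 2 ^ (k+1) + x ^ 2 ^ k := by
        rw [pow2Add h2, ← pow_mul, ← pow_succ']
      have e2 : tr (k+1) (x^2+x) = tr k (x^2+x) + (x^2+x) ^ 2 ^ k :=
        Finset.sum_range_succ _ k
      rw [e2, ← ih, e1]
      linear_combination - addSelf h2 (x ^ 2 ^ k)

/-- (T δ)^2 + T δ = δ^(2^k) + δ -/
lemma TtoPow (k : ℕ) (x : L) : (tr k x) ^ 2 + tr k x = x ^ 2 ^ k + x := by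
  rw [Tspec h2 k x, ← trSqComm h2, ← trAdd h2]

end Tsec

section gcdsec
variable {l : ℕ} (hpc : ∀ x : L, x ^ 2 ^ l = x)
include hpc

lemma powReduce (b r : ℕ) (x : L) : x ^ 2 ^ (b * l + r) = x ^ 2 ^ r := by
  induction b with
  | zero => norm_num
  | succ b ih =>
      have : (b+1) * l + r = (b * l + r) + l := by ring
      rw [this, pow_add, mul_comm (2 ^ (b*l+r)) (2^l), pow_mul, hpc, ih]

lemma sqEqOfPowEq {k : ℕ} (hl1 : 1 < l) (hgcd : Nat.gcd k l = 1) {x : L}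
    (hx : x ^ 2 ^ k = x) : x ^ 2 = x := by
  obtain ⟨a, -, ha⟩ := Nat.exists_mul_mod_eq_one_of_coprime hgcd hl1
  rw [Nat.mul_comm k a] at ha
  have iter : ∀ n : ℕ, x ^ 2 ^ (n * k) = x := by
    intro n
    induction n with
    | zero => norm_num
    | succ n ih =>
        have e : (n+1) * k = n * k + k := by ring
        rw [e, pow_add, pow_mul, ih, hx]
  have h0 := Nat.div_add_mod (a * k) l
  rw [ha] at h0
  have hmod : a * k = (a * k / l) * l + 1 := by
    rw [Nat.mul_comm (a * k / l) l]; omega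
  have := iter a
  rwa [hmod, powReduce hpc] at this

omit hpc in
lemma eqZeroOrOne {x : L} (h : x ^ 2 = x) : x = 0 ∨ x = 1 := by
  have : x * (x - 1) = 0 := by ring_nf; linear_combination h
  rcases mul_eq_zero.mp this with h' | h'
  · exact Or.inl h'
  · exact Or.inr (by linear_combination h')

end gcdsec


section finsec
open scoped Classical
variable [Fintype L] {l : ℕ} (h2 : (2 : L) = 0) (hpc : ∀ x : L, x ^ 2 ^ l = x)
  (hcard : Fintype.card L = 2 ^ l)

/-- the trace-zero hyperplane -/
noncomputable def SS (L : Type) [Field L] [Fintype L] (l : ℕ) : Finset L :=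
  Finset.univ.filter (fun m => tr l m = 0)

omit h2 hpc in
lemma memSS {m : L} : m ∈ SS L l ↔ tr l m = 0 := by
  simp [SS]

omit h2 hpc in
lemma sumSubst {S T : Finset L} {e : L → L}
    (hinj : ∀ x ∈ S, ∀ y ∈ S, e x = e y → x = y) (himg : S.image e = T) (F : L → L) :
    ∑ s ∈ T, F s = ∑ m ∈ S, F (e m) := by
  rw [← himg]
  exact Finset.sum_image hinj

omit h2 hpc in
lemma imgEq {S : Finset L} {e : L → L} (hmaps : ∀ m ∈ S, e m ∈ S)
    (hinj : ∀ x ∈ S, ∀ y ∈ S, e x = e y → x = y) : S.image e = S := by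
  apply Finset.eq_of_subset_of_card_le
  · intro w hw
    obtain ⟨m, hm, rfl⟩ := Finset.mem_image.mp hw
    exact hmaps m hm
  · rw [Finset.card_image_of_injOn (fun x hx y hy => hinj x hx y hy)]

include h2 in
lemma imageShift {c' : L} (htc : tr l c' = 1) :
    (SS L l).image (· + c') = Finset.univ.filter (fun w => tr l w = 1) := by
  ext w
  simp only [Finset.mem_image, Finset.mem_filter, Finset.mem_univ, true_and, memSS]
  constructor
  · rintro ⟨s, hs, rfl⟩
    rw [trAdd h2, hs, htc, zero_add]
  · intro hw
    refine ⟨w + c', ?_, ?_⟩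
    · rw [trAdd h2, hw, htc, addSelf h2]
    · have := addSelf h2 c'
      linear_combination this

include h2 hpc hcard in
lemma cardSS {c' : L} (htc : tr l c' = 1) : 2 * (SS L l).card = 2 ^ l := by
  set W := Finset.univ.filter (fun w => tr l w = (1:L)) with hW
  have h1 : (SS L l).card = W.card := by
    rw [hW, ← imageShift h2 htc]
    refine (Finset.card_image_of_injOn (fun x _ y _ h => ?_)).symm
    have hc := addSelf h2 c'
    linear_combination h - hc + hc
  have hdisj : Disjoint (SS L l) W := by
    rw [Finset.disjoint_left]
    intro a ha haW
    rw [memSS] at ha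
    rw [hW, Finset.mem_filter] at haW
    rw [ha] at haW
    exact zero_ne_one haW.2
  have hunion : SS L l ∪ W = Finset.univ := by
    ext a
    simp only [Finset.mem_union, memSS, hW, Finset.mem_filter, Finset.mem_univ, true_and,
      iff_true]
    exact trIdem hpc h2 a
  have h3 : (SS L l).card + W.card = 2 ^ l := by
    rw [← Finset.card_union_of_disjoint hdisj, hunion, Finset.card_univ, hcard]
  omega

include h2 hcard in
lemma Asum0 : (∑ w : L, w ^ 2 ^ 0 * w⁻¹) = 1 := by
  have he : ∀ w : L, w ^ 2 ^ 0 * w⁻¹ = if w = 0 then 0 else 1 := by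
    intro w
    rw [pow_zero, pow_one]
    split_ifs with h
    · rw [h, inv_zero, mul_zero]
    · exact mul_inv_cancel₀ h
  rw [Finset.sum_congr rfl (fun w _ => he w), Finset.sum_ite, Finset.sum_const,
    Finset.sum_const, smul_zero, zero_add, Finset.filter_ne', Finset.card_erase_of_mem
    (Finset.mem_univ 0), Finset.card_univ, hcard, nsmul_eq_mul, mul_one]
  have hc0 : ((2 ^ l : ℕ) : L) = 0 := by
    push_cast
    rw [h2]
    exact zero_pow (by
      intro h
      rw [h, pow_zero] at hcard
      have := Fintype.one_lt_card_iff_nontrivial (α := L) |>.mpr inferInstance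
      omega)
  have : ((2 ^ l - 1 : ℕ) : L) = ((2 ^ l : ℕ) : L) - 1 := by
    have h1 : 1 ≤ 2 ^ l := Nat.one_le_two_pow
    push_cast [Nat.cast_sub h1]
    ring
  rw [this, hc0]
  linear_combination - addSelf h2 1

include hcard in
lemma AsumJ {j : ℕ} (hj0 : 0 < j) (hjl : j < l) : (∑ w : L, w ^ 2 ^ j * w⁻¹) = 0 := by
  have he : ∀ w : L, w ^ 2 ^ j * w⁻¹ = w ^ (2 ^ j - 1) := by
    intro w
    rcases eq_or_ne w 0 with rfl | hw
    · rw [zero_pow (by positivity), zero_mul, eq_comm]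
      exact zero_pow (by
        have : 2 ≤ 2 ^ j := by
          calc 2 = 2 ^ 1 := (pow_one 2).symm
          _ ≤ 2 ^ j := Nat.pow_le_pow_right (by norm_num) hj0
        omega)
    · have h1 : w ^ 2 ^ j = w ^ (2 ^ j - 1) * w := by
        rw [← pow_succ, Nat.sub_add_cancel Nat.one_le_two_pow]
      rw [h1, mul_assoc, mul_inv_cancel₀ hw, mul_one]
  rw [Finset.sum_congr rfl (fun w _ => he w)]
  apply FiniteField.sum_pow_lt_card_sub_one
  rw [hcard]
  have h1 : 2 ^ j < 2 ^ l := Nat.pow_lt_pow_right (by norm_num) hjl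
  exact Nat.sub_lt_sub_right Nat.one_le_two_pow h1

include h2 hpc hcard in
lemma sumInvW {c' : L} (htc : tr l c' = 1) (hl0 : 0 < l) :
    ∑ s ∈ SS L l, (s + c')⁻¹ = 1 := by
  have hinj : ∀ x ∈ SS L l, ∀ y ∈ SS L l, x + c' = y + c' → x = y := by
    intro x _ y _ h
    linear_combination h
  have hstep : ∑ w ∈ Finset.univ.filter (fun w => tr l w = (1:L)), w⁻¹
      = ∑ s ∈ SS L l, (s + c')⁻¹ :=
    sumSubst hinj (imageShift h2 htc) (fun w => w⁻¹)
  rw [← hstep]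
  have hstep2 : ∑ w ∈ Finset.univ.filter (fun w => tr l w = (1:L)), w⁻¹
      = ∑ w : L, tr l w * w⁻¹ := by
    rw [← Finset.sum_filter_add_sum_filter_not Finset.univ (fun w => tr l w = (1:L))
      (fun w => tr l w * w⁻¹)]
    have e1 : ∑ w ∈ Finset.univ.filter (fun w => tr l w = (1:L)), tr l w * w⁻¹
        = ∑ w ∈ Finset.univ.filter (fun w => tr l w = (1:L)), w⁻¹ := by
      refine Finset.sum_congr rfl (fun w hw => ?_)
      rw [(Finset.mem_filter.mp hw).2, one_mul]
    have e2 : ∑ w ∈ Finset.univ.filter (fun w => ¬ tr l w = (1:L)), tr l w * w⁻¹ = 0 := by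
      refine Finset.sum_eq_zero (fun w hw => ?_)
      rcases trIdem hpc h2 w with h | h
      · rw [h, zero_mul]
      · exact absurd h (Finset.mem_filter.mp hw).2
    rw [e1, e2, add_zero]
  rw [hstep2]
  have hstep3 : ∑ w : L, tr l w * w⁻¹ = ∑ j ∈ Finset.range l, ∑ w : L, w ^ 2 ^ j * w⁻¹ := by
    rw [← Finset.sum_comm]
    refine Finset.sum_congr rfl (fun w _ => ?_)
    rw [tr, Finset.sum_mul]
  rw [hstep3]
  rw [Finset.sum_eq_single 0 (fun j hj hj0 => AsumJ hcard (Nat.pos_of_ne_zero hj0)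
    (Finset.mem_range.mp hj)) (fun h => absurd (Finset.mem_range.mpr hl0) h)]
  exact Asum0 h2 hcard

include hcard in
lemma sumUnivId (hl2 : 2 ≤ l) : ∑ x : L, x = 0 := by
  have := FiniteField.sum_pow_lt_card_sub_one L 1 (by
    rw [hcard]
    have : 4 ≤ 2 ^ l := by
      calc 4 = 2 ^ 2 := by norm_num
      _ ≤ 2 ^ l := Nat.pow_le_pow_right (by norm_num) hl2
    omega)
  simpa using this

include h2 hpc hcard in
lemma sumSSId (hl3 : 3 ≤ l) : ∑ m ∈ SS L l, m = 0 := by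
  have hsplit : (∑ m ∈ SS L l, m) + ∑ w ∈ Finset.univ.filter (fun w => ¬ tr l w = (0:L)), w
      = ∑ x : L, x := by
    rw [← Finset.sum_filter_add_sum_filter_not Finset.univ (fun w => tr l w = (0:L)) (fun w => w)]
    rfl
  have hW : ∑ w ∈ Finset.univ.filter (fun w => ¬ tr l w = (0:L)), w
      = ∑ w : L, tr l w * w := by
    rw [← Finset.sum_filter_add_sum_filter_not Finset.univ (fun w => ¬ tr l w = (0:L))
      (fun w => tr l w * w)]
    have e1 : ∑ w ∈ Finset.univ.filter (fun w => ¬ tr l w = (0:L)), tr l w * w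
        = ∑ w ∈ Finset.univ.filter (fun w => ¬ tr l w = (0:L)), w := by
      refine Finset.sum_congr rfl (fun w hw => ?_)
      rcases trIdem hpc h2 w with h | h
      · exact absurd h (Finset.mem_filter.mp hw).2
      · rw [h, one_mul]
    have e2 : ∑ w ∈ Finset.univ.filter (fun w => ¬ ¬ tr l w = (0:L)), tr l w * w = 0 := by
      refine Finset.sum_eq_zero (fun w hw => ?_)
      have := (Finset.mem_filter.mp hw).2
      rw [not_not.mp this, zero_mul]
    rw [e1, e2, add_zero]
  have hW0 : ∑ w : L, tr l w * w = 0 := by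
    have hstep : ∑ w : L, tr l w * w = ∑ j ∈ Finset.range l, ∑ w : L, w ^ (2 ^ j + 1) := by
      rw [← Finset.sum_comm]
      refine Finset.sum_congr rfl (fun w _ => ?_)
      rw [tr, Finset.sum_mul]
      exact Finset.sum_congr rfl (fun j _ => (pow_succ w (2 ^ j)).symm)
    rw [hstep]
    refine Finset.sum_eq_zero (fun j hj => ?_)
    apply FiniteField.sum_pow_lt_card_sub_one
    rw [hcard]
    have hjl : j < l := Finset.mem_range.mp hj
    have h1 : 2 ^ (j+1) ≤ 2 ^ l := Nat.pow_le_pow_right (by norm_num) (by omega)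
    have h2' : 2 ^ j + 2 ^ j = 2 ^ (j+1) := by rw [pow_succ]; ring
    have h3 : 8 ≤ 2 ^ l := by
      calc (8:ℕ) = 2 ^ 3 := by norm_num
      _ ≤ 2 ^ l := Nat.pow_le_pow_right (by norm_num) hl3
    have h4 : 1 ≤ 2 ^ j := Nat.one_le_two_pow
    omega
  have hU : ∑ x : L, x = 0 := sumUnivId hcard (by omega)
  rw [hW, hW0, hU] at hsplit
  linear_combination hsplit

include h2 hpc hcard in
lemma sqAddSurj (hl0 : 0 < l) {c₀ : L} (htc₀ : tr l c₀ = 1) :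
    ∀ m : L, tr l m = 0 → ∃ x : L, x ^ 2 + x = m := by
  set f : L → L := fun x => x ^ 2 + x with hf
  have hmem : ∀ x : L, f x ∈ SS L l := by
    intro x
    rw [memSS, hf]
    rw [trAdd h2, trSq hpc, addSelf h2]
  have hdich : ∀ x y : L, f x = f y → y = x ∨ y = x + 1 := by
    intro x y h
    have hsq : (y + x) ^ 2 = y + x := by
      rw [sqAdd h2]
      simp only [hf] at h
      linear_combination - h + addSelf h2 (x^2) - addSelf h2 y
    rcases eqZeroOrOne hsq with h' | h'
    · exact Or.inl (eqOfAddZero h2 h')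
    · right
      linear_combination h' - addSelf h2 x
  have hfib2 : ∀ b ∈ Finset.univ.image f, (Finset.univ.filter (fun x => f x = b)).card ≤ 2 := by
    intro b hb
    obtain ⟨x₀, _, hx₀⟩ := Finset.mem_image.mp hb
    have hsub : Finset.univ.filter (fun x => f x = b) ⊆ {x₀, x₀ + 1} := by
      intro y hy
      have hy' : f x₀ = f y := by rw [(Finset.mem_filter.mp hy).2, hx₀]
      rcases hdich x₀ y hy' with h | h
      · simp [h]
      · simp [h]
    calc (Finset.univ.filter (fun x => f x = b)).card ≤ ({x₀, x₀+1} : Finset L).card :=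
          Finset.card_le_card hsub
    _ ≤ 2 := by
        apply le_trans (Finset.card_insert_le _ _)
        simp
  have himg_sub : Finset.univ.image f ⊆ SS L l := by
    intro w hw
    obtain ⟨x, _, rfl⟩ := Finset.mem_image.mp hw
    exact hmem x
  have hcard1 : 2 ^ l ≤ 2 * (Finset.univ.image f).card := by
    have := Finset.card_le_mul_card_image (f := f) Finset.univ 2 hfib2
    rwa [Finset.card_univ, hcard] at this
  have hcard2 : (SS L l).card ≤ (Finset.univ.image f).card := by
    have := cardSS h2 hpc hcard htc₀
    omega
  have himg : Finset.univ.image f = SS L l :=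
    Finset.eq_of_subset_of_card_le himg_sub hcard2
  intro m hm
  have : m ∈ SS L l := memSS.mpr hm
  rw [← himg] at this
  obtain ⟨x, _, hx⟩ := Finset.mem_image.mp this
  exact ⟨x, hx⟩

include h2 in
lemma fiberPair {x₀ m : L} (hx₀ : x₀ ^ 2 + x₀ = m) :
    Finset.univ.filter (fun x : L => x ^ 2 + x = m) = {x₀, x₀ + 1} := by
  ext y
  simp only [Finset.mem_filter, Finset.mem_univ, true_and, Finset.mem_insert,
    Finset.mem_singleton]
  constructor
  · intro hy
    have hsq : (y + x₀) ^ 2 = y + x₀ := by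
      rw [sqAdd h2]
      linear_combination hy - hx₀ + addSelf h2 (x₀^2) - addSelf h2 y
    rcases eqZeroOrOne hsq with h' | h'
    · exact Or.inl (eqOfAddZero h2 h')
    · right
      linear_combination h' - addSelf h2 x₀
  · rintro (rfl | rfl)
    · exact hx₀
    · rw [sqAdd h2]
      linear_combination hx₀ + addSelf h2 1

end finsec


end FracRig

open FracRig in
/-- Let L = F_{2^l}, l odd, q = 2^k, gcd(k,l) = 1, c, d ∈ L with Tr(c) = 1 and
d ≠ 0. If φ(x) = (x^{q+1}+d)/(x^q+x+c) is injective on L, then c = 1 and d = 1. -/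
theorem frac_injective_rigidity (k l : ℕ) (hk : 0 < k) (hl : 0 < l) (hlodd : Odd l)
    (hgcd : Nat.gcd k l = 1)
    (L : Type) [Field L] [Fintype L] (hcard : Fintype.card L = 2 ^ l)
    (c d : L) (htr : (∑ j ∈ Finset.range l, c ^ 2 ^ j) = 1) (hd : d ≠ 0)
    (hinj : Function.Injective fun x : L =>
      (x ^ (2 ^ k + 1) + d) / (x ^ (2 ^ k) + x + c)) :
    c = 1 ∧ d = 1 := by
  classical
  have htr' : tr l c = 1 := htr
  have hpc : ∀ x : L, x ^ 2 ^ l = x := fun x => by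
    have := FiniteField.pow_card x; rwa [hcard] at this
  have h2 : (2 : L) = 0 := by
    have h0 := FiniteField.cast_card_eq_zero L
    rw [hcard] at h0
    push_cast at h0
    exact pow_eq_zero_iff hl.ne' |>.mp h0
  -- the case l = 1
  rcases eq_or_ne l 1 with hl1 | hl1
  · subst hl1
    constructor
    · simpa [tr, Finset.sum_range_one] using htr
    · have hd2 : d ^ 2 = d := by simpa using hpc d
      rcases eqZeroOrOne hd2 with h | h
      · exact absurd h hd
      · exact h
  have hl3 : 3 ≤ l := by
    obtain ⟨m, hm⟩ := hlodd; omega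
  have hl1' : 1 < l := by omega
  set q := 2 ^ k with hq
  set φ : L → L := fun x : L => (x ^ (q + 1) + d) / (x ^ q + x + c) with hφ
  -- membership of x^2+x in SS
  have hfmem : ∀ x : L, tr l (x ^ 2 + x) = 0 := by
    intro x
    rw [trAdd h2, trSq hpc, addSelf h2]
  -- T = tr k maps SS to SS and is injective on SS
  have hTmem : ∀ m ∈ SS L l, tr k m ∈ SS L l := by
    intro m hm
    rw [memSS] at hm ⊢
    show tr l (∑ i ∈ Finset.range k, m ^ 2 ^ i) = 0
    rw [trSum h2]
    exact Finset.sum_eq_zero (fun i _ => by rw [trPow2 hpc, hm])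
  have hTinj : ∀ x ∈ SS L l, ∀ y ∈ SS L l, tr k x = tr k y → x = y := by
    intro x hx y hy hxy
    have hδ : tr k (x + y) = 0 := by
      rw [trAdd h2, hxy, addSelf h2]
    have hpow : (x+y) ^ 2 ^ k + (x+y) = 0 := by
      rw [← TtoPow h2 k (x+y), hδ]
      ring
    have hfix : (x+y) ^ 2 ^ k = x + y := eqOfAddZero h2 hpow
    have hsq := sqEqOfPowEq hpc hl1' hgcd hfix
    rcases eqZeroOrOne hsq with h' | h'
    · exact eqOfAddZero h2 h'
    · exfalso
      have : tr l (x + y) = 0 := by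
        rw [trAdd h2, memSS.mp hx, memSS.mp hy, addSelf h2]
      rw [h', trOne h2 l hlodd] at this
      exact one_ne_zero this
  have hTimg : (SS L l).image (tr k) = SS L l := imgEq hTmem hTinj
  -- squaring maps SS to SS bijectively
  have hSqmem : ∀ m ∈ SS L l, m ^ 2 ∈ SS L l := by
    intro m hm
    rw [memSS] at hm ⊢
    rw [trSq hpc, hm]
  have hSqinj : ∀ x ∈ SS L l, ∀ y ∈ SS L l, x ^ 2 = y ^ 2 → x = y := by
    intro x _ y _ hxy
    have : (x + y) ^ 2 = 0 := by
      rw [sqAdd h2, hxy]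
      exact addSelf h2 _
    exact eqOfAddZero h2 (pow_eq_zero_iff (n := 2) (by norm_num) |>.mp this)
  have hSqimg : (SS L l).image (· ^ 2) = SS L l := imgEq hSqmem hSqinj
  -- fiberwise sum of any function
  have hfibsum : ∀ G : L → L, ∑ x : L, G x
      = ∑ m ∈ SS L l, ∑ x ∈ Finset.univ.filter (fun x : L => x ^ 2 + x = m), G x := by
    intro G
    exact (Finset.sum_fiberwise_of_maps_to (fun x _ => memSS.mpr (hfmem x)) G).symm
  -- Step 1 : c = 1
  have hden : ∀ x : L, x ^ q + x + c = tr k (x ^ 2 + x) + c := by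
    intro x
    rw [← Tspec h2 k x]
  have hdenne : ∀ m : L, tr l m = 0 → tr k m + c ≠ 0 := by
    intro m hm
    apply neZeroOfTrOne (l := l)
    rw [trAdd h2, htr', memSS.mp (hTmem m (memSS.mpr hm)), zero_add]
  have hpair : ∀ m ∈ SS L l, ∑ x ∈ Finset.univ.filter (fun x : L => x ^ 2 + x = m), φ x
      = (tr k m + 1) / (tr k m + c) := by
    intro m hm
    obtain ⟨x₀, hx₀⟩ := sqAddSurj h2 hpc hcard hl htr' m (memSS.mp hm)
    rw [fiberPair h2 hx₀]
    have hne01 : x₀ ∉ ({x₀ + 1} : Finset L) := by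
      rw [Finset.mem_singleton]
      intro h
      have : (1:L) = 0 := by linear_combination - h
      exact one_ne_zero this
    rw [Finset.sum_insert hne01, Finset.sum_singleton]
    have hd1 : x₀ ^ q + x₀ + c = tr k m + c := by rw [hden x₀, hx₀]
    have hd2' : (x₀ + 1) ^ q + (x₀ + 1) + c = tr k m + c := by
      rw [pow2Add h2 k x₀ 1, one_pow]
      linear_combination hd1 + addSelf h2 1
    have hx0q : x₀ ^ q + x₀ = tr k m := by linear_combination hd1
    show (x₀ ^ (q + 1) + d) / (x₀ ^ q + x₀ + c) + ((x₀+1) ^ (q + 1) + d) / ((x₀+1) ^ q + (x₀+1) + c)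
        = (tr k m + 1) / (tr k m + c)
    rw [hd1, hd2', ← add_div]
    congr 1
    have e1 : (x₀ + 1) ^ (q + 1) = ((x₀ + 1) ^ q) * (x₀ + 1) := pow_succ _ _
    have e2 : (x₀ + 1) ^ q = x₀ ^ q + 1 := by rw [pow2Add h2 k x₀ 1, one_pow]
    have e3 : x₀ ^ (q + 1) = x₀ ^ q * x₀ := pow_succ _ _
    rw [e1, e2, e3]
    linear_combination hx0q + (x₀ ^ q * x₀ + d) * h2
  have hsum1 : ∑ x : L, φ x = 1 + c := by
    rw [hfibsum φ, Finset.sum_congr rfl hpair]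
    have hsubT : ∑ m ∈ SS L l, (tr k m + 1) / (tr k m + c)
        = ∑ s ∈ SS L l, (s + 1) / (s + c) :=
      (sumSubst hTinj hTimg (fun s => (s + 1) / (s + c))).symm
    rw [hsubT]
    have hsplit : ∀ s ∈ SS L l, (s + 1) / (s + c) = 1 + (1 + c) * (s + c)⁻¹ := by
      intro s hs
      have hne' : s + c ≠ 0 :=
        neZeroOfTrOne (l := l) (by rw [trAdd h2, memSS.mp hs, htr', zero_add])
      have e : (s + c) + (1 + c) = s + 1 := by linear_combination addSelf h2 c
      calc (s + 1) / (s + c) = ((s + c) + (1 + c)) / (s + c) := by rw [e]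
      _ = (s + c) / (s + c) + (1 + c) / (s + c) := add_div _ _ _
      _ = 1 + (1 + c) * (s + c)⁻¹ := by rw [div_self hne', div_eq_mul_inv]
    rw [Finset.sum_congr rfl hsplit, Finset.sum_add_distrib, Finset.sum_const,
      ← Finset.mul_sum, sumInvW h2 hpc hcard htr' hl, mul_one]
    have hcS : 2 * (SS L l).card = 2 ^ l := cardSS h2 hpc hcard htr'
    have hcS' : (SS L l).card = 2 ^ (l - 1) := by
      have h2l : 2 ^ l = 2 * 2 ^ (l - 1) := by
        rw [← pow_succ']
        congr 1
        omega
      omega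
    have hzeroCard : ((SS L l).card : L) = 0 := by
      rw [hcS']
      push_cast
      rw [h2]
      exact zero_pow (by omega)
    rw [nsmul_eq_mul, hzeroCard, zero_mul, zero_add]
  have hbij : Function.Bijective φ := Finite.injective_iff_bijective.mp hinj
  have hzero : ∑ x : L, φ x = 0 := by
    rw [Fintype.sum_bijective φ hbij φ id (fun x => rfl)]
    simpa using sumUnivId hcard (by omega)
  have hc : c = 1 := (eqOfAddZero h2 (by rw [← hsum1, hzero])).symm
  subst hc
  refine ⟨rfl, ?_⟩
  -- Step 2 : d = 1
  have h1tr : tr l (1 : L) = 1 := trOne h2 l hlodd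
  set h : L → L := fun m => (m + d) / (tr k m + 1) with hh
  have hdenne1 : ∀ m : L, tr l m = 0 → tr k m + 1 ≠ 0 := fun m hm => hdenne m hm
  have hφform : ∀ x : L, φ x = x + h (x ^ 2 + x) := by
    intro x
    have hdx : x ^ q + x + 1 = tr k (x ^ 2 + x) + 1 := hden x
    have hnex : x ^ q + x + 1 ≠ 0 := by
      rw [hdx]
      exact hdenne1 _ (hfmem x)
    rw [hh]
    show (x ^ (q + 1) + d) / (x ^ q + x + 1) = x + (x ^ 2 + x + d) / (tr k (x ^ 2 + x) + 1)
    rw [← hdx, add_div' _ _ _ hnex]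
    congr 1
    have e3 : x ^ (q + 1) = x ^ q * x := pow_succ _ _
    rw [e3]
    linear_combination - (x^2 + x) * h2
  have hνmem : ∀ m ∈ SS L l, m + (h m + h m ^ 2) ∈ SS L l := by
    intro m hm
    rw [memSS] at hm ⊢
    rw [trAdd h2, trAdd h2, trSq hpc, hm, addSelf h2, add_zero]
  have hφsq : ∀ x : L, φ x ^ 2 + φ x = (x ^ 2 + x) + (h (x ^ 2 + x) + h (x ^ 2 + x) ^ 2) := by
    intro x
    rw [hφform x, sqAdd h2]
    ring
  have hφadd1 : ∀ x : L, φ (x + 1) = φ x + 1 := by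
    intro x
    have e : (x + 1) ^ 2 + (x + 1) = x ^ 2 + x := by
      rw [sqAdd h2]
      linear_combination addSelf h2 1
    rw [hφform (x+1), hφform x, e]
    ring
  have hνinj : ∀ m₁ ∈ SS L l, ∀ m₂ ∈ SS L l,
      m₁ + (h m₁ + h m₁ ^ 2) = m₂ + (h m₂ + h m₂ ^ 2) → m₁ = m₂ := by
    intro m₁ hm₁ m₂ hm₂ heq
    obtain ⟨x₁, hx₁⟩ := sqAddSurj h2 hpc hcard hl h1tr m₁ (memSS.mp hm₁)
    obtain ⟨x₂, hx₂⟩ := sqAddSurj h2 hpc hcard hl h1tr m₂ (memSS.mp hm₂)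
    have e1 : φ x₁ ^ 2 + φ x₁ = φ x₂ ^ 2 + φ x₂ := by
      rw [hφsq x₁, hφsq x₂, hx₁, hx₂, heq]
    have e2 : (φ x₁ + φ x₂) ^ 2 = φ x₁ + φ x₂ := by
      rw [sqAdd h2]
      linear_combination e1 + φ x₂ ^ 2 * h2 - φ x₁ * h2
    rcases eqZeroOrOne e2 with h' | h'
    · have : φ x₁ = φ x₂ := eqOfAddZero h2 h'
      have hx12 : x₁ = x₂ := hinj this
      rw [← hx₁, ← hx₂, hx12]
    · have : φ x₁ = φ (x₂ + 1) := by
        rw [hφadd1 x₂]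
        linear_combination h' - addSelf h2 (φ x₂)
      have hx12 : x₁ = x₂ + 1 := hinj this
      rw [← hx₁, ← hx₂, hx12, sqAdd h2]
      linear_combination addSelf h2 1
  have hνimg : (SS L l).image (fun m => m + (h m + h m ^ 2)) = SS L l :=
    imgEq hνmem hνinj
  have hνsum : ∑ s ∈ SS L l, s = ∑ m ∈ SS L l, (m + (h m + h m ^ 2)) := by
    have := sumSubst hνinj hνimg (fun s => s)
    simpa using this
  have hsum_hh : ∑ m ∈ SS L l, (h m + h m ^ 2) = 0 := by
    have hs0 : ∑ s ∈ SS L l, s = (0 : L) := sumSSId h2 hpc hcard hl3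
    rw [Finset.sum_add_distrib, hs0] at hνsum
    linear_combination - hνsum
  -- compute the two pieces
  have hsub1 : ∑ m ∈ SS L l, (tr k m + 1)⁻¹ = 1 := by
    have := sumSubst hTinj hTimg (fun s => (s + 1)⁻¹)
    rw [← this]
    exact sumInvW h2 hpc hcard h1tr hl
  have hsumh1 : ∑ m ∈ SS L l, h m
      = (∑ m ∈ SS L l, m * (tr k m + 1)⁻¹) + d := by
    have he : ∀ m ∈ SS L l, h m = m * (tr k m + 1)⁻¹ + d * (tr k m + 1)⁻¹ := by
      intro m hm
      rw [hh]
      show (m + d) / (tr k m + 1) = _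
      rw [add_div, div_eq_mul_inv, div_eq_mul_inv]
    rw [Finset.sum_congr rfl he, Finset.sum_add_distrib, ← Finset.mul_sum, hsub1, mul_one]
  have hsumh2 : ∑ m ∈ SS L l, (h m) ^ 2
      = (∑ m ∈ SS L l, m * (tr k m + 1)⁻¹) + d ^ 2 := by
    have he : ∀ m ∈ SS L l, (h m) ^ 2
        = m ^ 2 * (tr k (m ^ 2) + 1)⁻¹ + d ^ 2 * (tr k (m ^ 2) + 1)⁻¹ := by
      intro m hm
      rw [hh]
      show ((m + d) / (tr k m + 1)) ^ 2 = _
      have hTsq : (tr k m + 1) ^ 2 = tr k (m ^ 2) + 1 := by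
        rw [sqAdd h2, one_pow, trSqComm h2 k m]
      rw [div_pow, sqAdd h2 m d, hTsq, add_div, div_eq_mul_inv, div_eq_mul_inv]
    rw [Finset.sum_congr rfl he, Finset.sum_add_distrib, ← Finset.mul_sum]
    have hsubSq : ∀ F : L → L, ∑ m ∈ SS L l, F (m ^ 2) = ∑ s ∈ SS L l, F s := by
      intro F
      exact (sumSubst hSqinj hSqimg F).symm
    rw [hsubSq (fun u => u * (tr k u + 1)⁻¹), hsubSq (fun u => (tr k u + 1)⁻¹), hsub1, mul_one]
  have hfinal : d + d ^ 2 = 0 := by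
    rw [Finset.sum_add_distrib, hsumh1, hsumh2] at hsum_hh
    linear_combination hsum_hh - addSelf h2 (∑ m ∈ SS L l, m * (tr k m + 1)⁻¹)
  have hd2 : d ^ 2 = d := by linear_combination hfinal - addSelf h2 d
  rcases eqZeroOrOne hd2 with h' | h'
  · exact absurd h' hd
  · exact h'
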